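/- For every small category C, every n > 0, every i with 0 < i < n, and every simplicial map F : Λ[n,i] → N(C), there is a unique simplicial map Δ[n] → N(C) whose restriction to the horn Λ[n,i] is F. -/

import Mathlib

open CategoryTheory Simplicial

lemma spine_yonedaEquiv_aux {X : SSet} (n : ℕ) (G : (Δ[n] : SSet) ⟶ X) :
    X.spine n (SSet.yonedaEquiv G) =
      (SSet.stdSimplex.spineId n).map G := by
  have key : SSet.yonedaEquiv G = G.app _ (SSet.stdSimplex.objEquiv.symm (𝟙 _)) := rfl
  ext j
  · dsimp [SSet.stdSimplex.spineId, SSet.Path.map]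
    rw [key, ← FunctorToTypes.naturality]
    rfl
  · dsimp [SSet.stdSimplex.spineId, SSet.Path.map]
    rw [key, ← FunctorToTypes.naturality]
    rfl

lemma unique_ext_aux {X : SSet} [SSet.IsStrictSegal X] {m : ℕ} (i : Fin (m + 3))
    (h₀ : 0 < i) (hₙ : i < Fin.last (m + 2))
    (G G' : (Δ[m+2] : SSet) ⟶ X)
    (h : Λ[m+2, i].ι ≫ G = Λ[m+2, i].ι ≫ G') :
    G = G' := by
  apply SSet.yonedaEquiv.injective
  apply (SSet.StrictSegal.ofIsStrictSegal X).spineInjective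
  dsimp only [SSet.StrictSegal.spineEquiv, Equiv.coe_fn_mk]
  rw [spine_yonedaEquiv_aux, spine_yonedaEquiv_aux,
    ← SSet.horn.spineId_map_hornInclusion i h₀ hₙ]
  have : ∀ (H : (Δ[m+2] : SSet) ⟶ X),
      ((SSet.horn.spineId i h₀ hₙ).map Λ[m+2, i].ι).map H =
        (SSet.horn.spineId i h₀ hₙ).map (Λ[m+2, i].ι ≫ H) := by
    intro H; rfl
  rw [this G, this G', h]

/-- For every small category `C`, every `n > 0`, every `i` with `0 < i < n`, and every
simplicial map `F : Λ[n, i] → N(C)`, there is a unique simplicial map `Δ[n] → N(C)`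
whose restriction to the horn `Λ[n, i]` is `F`. -/
theorem nerve_unique_inner_horn_filler (C : Type u) [SmallCategory C]
    (n : ℕ) (i : Fin (n + 1)) (h0 : 0 < (i : ℕ)) (hn : (i : ℕ) < n)
    (F : (Λ[n, i] : SSet) ⟶ nerve C) :
    ∃! G : (Δ[n] : SSet) ⟶ nerve C, Λ[n, i].ι ≫ G = F := by
  obtain ⟨m, rfl⟩ : ∃ m, n = m + 2 := ⟨n - 2, by omega⟩
  have h₀ : 0 < i := by rw [Fin.lt_def]; simpa using h0
  have hₙ : i < Fin.last (m + 2) := by rw [Fin.lt_def]; simpa using hn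
  obtain ⟨G, hG⟩ := SSet.Quasicategory.hornFilling h₀ hₙ F
  exact ⟨G, hG.symm, fun G' hG' => unique_ext_aux i h₀ hₙ G' G (by rw [hG', ← hG])⟩
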